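/- For every R > 0 there exists μ = μ(R) > 0 such that for all X, Y ∈ ℝ^{n×2} with ‖X‖ ≤ R and ‖Y‖ ≤ R one has det(B(X) − B(Y)) ≤ −μ·‖B(X) − B(Y)‖². -/

import Mathlib

open Matrix BigOperators

noncomputable section

/-- Frobenius inner product of matrices. -/
def frobInner {m k : ℕ} (X Y : Matrix (Fin m) (Fin k) ℝ) : ℝ :=
  ∑ i, ∑ j, X i j * Y i j

/-- Frobenius norm of a matrix. -/
def frobNorm {m k : ℕ} (X : Matrix (Fin m) (Fin k) ℝ) : ℝ :=
  Real.sqrt (frobInner X X)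

/-- The area integrand `𝒜(X) = √(1 + ‖X‖² + det(XᵀX))`. -/
def Area {n : ℕ} (X : Matrix (Fin n) (Fin 2) ℝ) : ℝ :=
  Real.sqrt (1 + frobInner X X + (Xᵀ * X).det)

/-- The symplectic matrix `J = [[0,1],[−1,0]]`. -/
def symJ : Matrix (Fin 2) (Fin 2) ℝ := !![0, 1; -1, 0]

/-- The gradient of a function on matrix space, given by entrywise partial derivatives. -/
def grad {n : ℕ} (f : Matrix (Fin n) (Fin 2) ℝ → ℝ) (X : Matrix (Fin n) (Fin 2) ℝ) :
    Matrix (Fin n) (Fin 2) ℝ :=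
  fun i j => deriv (fun t : ℝ => f (X + t • Matrix.single i j 1)) 0

/-- `A(X) = D𝒜(X)J`. -/
def matA {n : ℕ} (X : Matrix (Fin n) (Fin 2) ℝ) : Matrix (Fin n) (Fin 2) ℝ :=
  grad Area X * symJ

/-- `B(X) = XᵀD𝒜(X)J − 𝒜(X)J`. -/
def matB {n : ℕ} (X : Matrix (Fin n) (Fin 2) ℝ) : Matrix (Fin 2) (Fin 2) ℝ :=
  Xᵀ * grad Area X * symJ - Area X • symJ

section helpers
variable {n : ℕ}


lemma entry_eq (X E : Matrix (Fin n) (Fin 2) ℝ) (t : ℝ) (p q : Fin 2) :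
    ((X + t • E)ᵀ * (X + t • E)) p q = ∑ i, (X i p + t * E i p) * (X i q + t * E i q) := by
  simp [Matrix.mul_apply, Matrix.transpose_apply, Matrix.add_apply, Matrix.smul_apply]

lemma entry_hasDerivAt (X E : Matrix (Fin n) (Fin 2) ℝ) (p q : Fin 2) :
    HasDerivAt (fun t : ℝ => ((X + t • E)ᵀ * (X + t • E)) p q)
      (∑ i, (E i p * X i q + X i p * E i q)) 0 := by
  have h : (fun t : ℝ => ((X + t • E)ᵀ * (X + t • E)) p q)
      = fun t : ℝ => ∑ i, (X i p + t * E i p) * (X i q + t * E i q) :=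
    funext fun t => entry_eq X E t p q
  rw [h]
  apply HasDerivAt.fun_sum
  intro i _
  have h1 : HasDerivAt (fun t : ℝ => X i p + t * E i p) (E i p) 0 := by
    simpa using ((hasDerivAt_id (0:ℝ)).mul_const (E i p)).const_add (X i p)
  have h2 : HasDerivAt (fun t : ℝ => X i q + t * E i q) (E i q) 0 := by
    simpa using ((hasDerivAt_id (0:ℝ)).mul_const (E i q)).const_add (X i q)
  simpa using h1.fun_mul h2

lemma frob_hasDerivAt (X E : Matrix (Fin n) (Fin 2) ℝ) :
    HasDerivAt (fun t : ℝ => frobInner (X + t • E) (X + t • E))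
      (∑ i, ∑ j, (E i j * X i j + X i j * E i j)) 0 := by
  have h : (fun t : ℝ => frobInner (X + t • E) (X + t • E))
      = fun t : ℝ => ∑ i, ∑ j, (X i j + t * E i j) * (X i j + t * E i j) := by
    funext t; simp [frobInner, Matrix.add_apply, Matrix.smul_apply]
  rw [h]
  apply HasDerivAt.fun_sum; intro i _
  apply HasDerivAt.fun_sum; intro j _
  have h1 : HasDerivAt (fun t : ℝ => X i j + t * E i j) (E i j) 0 := by
    simpa using ((hasDerivAt_id (0:ℝ)).mul_const (E i j)).const_add (X i j)
  simpa using h1.fun_mul h1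

lemma g_hasDerivAt (X E : Matrix (Fin n) (Fin 2) ℝ) :
    HasDerivAt (fun t : ℝ => 1 + frobInner (X + t • E) (X + t • E) + ((X + t • E)ᵀ * (X + t • E)).det)
      ((∑ i, ∑ j, (E i j * X i j + X i j * E i j)) +
       ((∑ i, (E i 0 * X i 0 + X i 0 * E i 0)) * (Xᵀ * X) 1 1
        + (Xᵀ * X) 0 0 * (∑ i, (E i 1 * X i 1 + X i 1 * E i 1))
        - ((∑ i, (E i 0 * X i 1 + X i 0 * E i 1)) * (Xᵀ * X) 1 0
           + (Xᵀ * X) 0 1 * (∑ i, (E i 1 * X i 0 + X i 1 * E i 0))))) 0 := by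
  have hdet : HasDerivAt (fun t : ℝ => ((X + t • E)ᵀ * (X + t • E)).det)
      ((∑ i, (E i 0 * X i 0 + X i 0 * E i 0)) * (Xᵀ * X) 1 1
        + (Xᵀ * X) 0 0 * (∑ i, (E i 1 * X i 1 + X i 1 * E i 1))
        - ((∑ i, (E i 0 * X i 1 + X i 0 * E i 1)) * (Xᵀ * X) 1 0
           + (Xᵀ * X) 0 1 * (∑ i, (E i 1 * X i 0 + X i 1 * E i 0)))) 0 := by
    have h : (fun t : ℝ => ((X + t • E)ᵀ * (X + t • E)).det)
        = fun t : ℝ => ((X + t • E)ᵀ * (X + t • E)) 0 0 * ((X + t • E)ᵀ * (X + t • E)) 1 1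
            - ((X + t • E)ᵀ * (X + t • E)) 0 1 * ((X + t • E)ᵀ * (X + t • E)) 1 0 := by
      funext t; rw [Matrix.det_fin_two]
    rw [h]
    have e00 := entry_hasDerivAt X E 0 0
    have e01 := entry_hasDerivAt X E 0 1
    have e10 := entry_hasDerivAt X E 1 0
    have e11 := entry_hasDerivAt X E 1 1
    have := (e00.fun_mul e11).fun_sub (e01.fun_mul e10)
    simpa using this
  have := ((hasDerivAt_const (0:ℝ) (1:ℝ)).fun_add (frob_hasDerivAt X E)).fun_add hdet
  simpa using this

lemma frobInner_self_nonneg (X : Matrix (Fin n) (Fin 2) ℝ) : 0 ≤ frobInner X X := by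
  refine Finset.sum_nonneg fun i _ => Finset.sum_nonneg fun j _ => mul_self_nonneg _

lemma det_gram_nonneg (X : Matrix (Fin n) (Fin 2) ℝ) : 0 ≤ (Xᵀ * X).det := by
  rw [Matrix.det_fin_two]
  have h01 : (Xᵀ * X) 0 1 = ∑ i, X i 0 * X i 1 := by simp [Matrix.mul_apply]
  have h10 : (Xᵀ * X) 1 0 = ∑ i, X i 1 * X i 0 := by simp [Matrix.mul_apply]
  have h00 : (Xᵀ * X) 0 0 = ∑ i, X i 0 * X i 0 := by simp [Matrix.mul_apply]
  have h11 : (Xᵀ * X) 1 1 = ∑ i, X i 1 * X i 1 := by simp [Matrix.mul_apply]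
  have hcs := Finset.sum_mul_sq_le_sq_mul_sq Finset.univ (fun i => X i 0) (fun i => X i 1)
  rw [h01, h10, h00, h11]
  have e1 : ∑ i, X i 1 * X i 0 = ∑ i, X i 0 * X i 1 := by
    exact Finset.sum_congr rfl fun i _ => mul_comm _ _
  rw [e1]
  have e2 : ∑ i, X i 0 * X i 0 = ∑ i, (fun i => X i 0) i ^ 2 := by
    exact Finset.sum_congr rfl fun i _ => (sq (X i 0)).symm
  have e3 : ∑ i, X i 1 * X i 1 = ∑ i, (fun i => X i 1) i ^ 2 := by
    exact Finset.sum_congr rfl fun i _ => (sq (X i 1)).symm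
  rw [e2, e3]
  nlinarith [hcs]

lemma areaSq_pos (X : Matrix (Fin n) (Fin 2) ℝ) : 0 < 1 + frobInner X X + (Xᵀ * X).det := by
  have := frobInner_self_nonneg X; have := det_gram_nonneg X; linarith

lemma area_sq (X : Matrix (Fin n) (Fin 2) ℝ) :
    Area X ^ 2 = 1 + frobInner X X + (Xᵀ * X).det :=
  Real.sq_sqrt (areaSq_pos X).le

lemma area_pos (X : Matrix (Fin n) (Fin 2) ℝ) : 0 < Area X :=
  Real.sqrt_pos.mpr (areaSq_pos X)

lemma sum_std_mul (i : Fin n) (j p q : Fin 2) (X : Matrix (Fin n) (Fin 2) ℝ) :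
    ∑ k, Matrix.single i j 1 k p * X k q = if j = p then X i q else 0 := by
  by_cases h : j = p <;> simp [Matrix.single, ite_mul, h, Finset.sum_ite_eq]

lemma sum_mul_std (i : Fin n) (j p q : Fin 2) (X : Matrix (Fin n) (Fin 2) ℝ) :
    ∑ k, X k q * Matrix.single i j 1 k p = if j = p then X i q else 0 := by
  by_cases h : j = p <;> simp [Matrix.single, mul_ite, h, Finset.sum_ite_eq]

lemma deriv_area (X E : Matrix (Fin n) (Fin 2) ℝ) :
    deriv (fun t : ℝ => Area (X + t • E)) 0 =
      ((∑ i, ∑ j, (E i j * X i j + X i j * E i j)) +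
       ((∑ i, (E i 0 * X i 0 + X i 0 * E i 0)) * (Xᵀ * X) 1 1
        + (Xᵀ * X) 0 0 * (∑ i, (E i 1 * X i 1 + X i 1 * E i 1))
        - ((∑ i, (E i 0 * X i 1 + X i 0 * E i 1)) * (Xᵀ * X) 1 0
           + (Xᵀ * X) 0 1 * (∑ i, (E i 1 * X i 0 + X i 1 * E i 0))))) / (2 * Area X) := by
  have hg := g_hasDerivAt X E
  have h0 : (1 + frobInner (X + (0:ℝ) • E) (X + (0:ℝ) • E)
      + ((X + (0:ℝ) • E)ᵀ * (X + (0:ℝ) • E)).det) ≠ 0 := by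
    have : X + (0:ℝ) • E = X := by simp
    rw [this]; exact (areaSq_pos X).ne'
  have hs := hg.sqrt h0
  have harea : (fun t : ℝ => Area (X + t • E))
      = fun t : ℝ => Real.sqrt (1 + frobInner (X + t • E) (X + t • E)
          + ((X + t • E)ᵀ * (X + t • E)).det) := rfl
  rw [harea, hs.deriv]
  congr 1
  have : X + (0:ℝ) • E = X := by simp
  rw [this]
  rfl

lemma gram_symm (X : Matrix (Fin n) (Fin 2) ℝ) : (Xᵀ * X) 1 0 = (Xᵀ * X) 0 1 := by
  simp [Matrix.mul_apply, mul_comm]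

lemma grad_zero (X : Matrix (Fin n) (Fin 2) ℝ) (i : Fin n) :
    grad Area X i 0 = (X i 0 * (1 + (Xᵀ * X) 1 1) - X i 1 * (Xᵀ * X) 0 1) / Area X := by
  have hA := (area_pos X).ne'
  show deriv (fun t : ℝ => Area (X + t • Matrix.single i 0 1)) 0 = _
  rw [deriv_area]
  simp only [Fin.sum_univ_two, Finset.sum_add_distrib, sum_std_mul, sum_mul_std]
  norm_num [gram_symm]
  rw [div_eq_div_iff (by positivity) hA]
  ring

lemma grad_one (X : Matrix (Fin n) (Fin 2) ℝ) (i : Fin n) :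
    grad Area X i 1 = (X i 1 * (1 + (Xᵀ * X) 0 0) - X i 0 * (Xᵀ * X) 0 1) / Area X := by
  have hA := (area_pos X).ne'
  show deriv (fun t : ℝ => Area (X + t • Matrix.single i 1 1)) 0 = _
  rw [deriv_area]
  simp only [Fin.sum_univ_two, Finset.sum_add_distrib, sum_std_mul, sum_mul_std]
  norm_num [gram_symm]
  rw [div_eq_div_iff (by positivity) hA]
  ring

lemma sum_col (X : Matrix (Fin n) (Fin 2) ℝ) (p l : Fin 2) :
    ∑ k, X k p * X k l = (Xᵀ * X) p l := by
  simp [Matrix.mul_apply]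

lemma XtG_zero (X : Matrix (Fin n) (Fin 2) ℝ) (p : Fin 2) :
    (Xᵀ * grad Area X) p 0
      = ((Xᵀ * X) p 0 * (1 + (Xᵀ * X) 1 1) - (Xᵀ * X) p 1 * (Xᵀ * X) 0 1) / Area X := by
  rw [Matrix.mul_apply]
  have h : ∀ k, Xᵀ p k * grad Area X k 0
      = (X k p * X k 0 * (1 + (Xᵀ * X) 1 1) - X k p * X k 1 * (Xᵀ * X) 0 1) / Area X := by
    intro k; rw [grad_zero]; simp only [Matrix.transpose_apply]; rw [mul_div_assoc']; ring_nf
  rw [Finset.sum_congr rfl (fun k _ => h k), ← Finset.sum_div]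
  congr 1
  rw [Finset.sum_sub_distrib, ← Finset.sum_mul, ← Finset.sum_mul, sum_col, sum_col]

lemma XtG_one (X : Matrix (Fin n) (Fin 2) ℝ) (p : Fin 2) :
    (Xᵀ * grad Area X) p 1
      = ((Xᵀ * X) p 1 * (1 + (Xᵀ * X) 0 0) - (Xᵀ * X) p 0 * (Xᵀ * X) 0 1) / Area X := by
  rw [Matrix.mul_apply]
  have h : ∀ k, Xᵀ p k * grad Area X k 1
      = (X k p * X k 1 * (1 + (Xᵀ * X) 0 0) - X k p * X k 0 * (Xᵀ * X) 0 1) / Area X := by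
    intro k; rw [grad_one]; simp only [Matrix.transpose_apply]; rw [mul_div_assoc']; ring_nf
  rw [Finset.sum_congr rfl (fun k _ => h k), ← Finset.sum_div]
  congr 1
  rw [Finset.sum_sub_distrib, ← Finset.sum_mul, ← Finset.sum_mul, sum_col, sum_col]

lemma frob_eq (X : Matrix (Fin n) (Fin 2) ℝ) :
    frobInner X X = (Xᵀ * X) 0 0 + (Xᵀ * X) 1 1 := by
  simp [frobInner, Fin.sum_univ_two, Matrix.mul_apply, Finset.sum_add_distrib]

lemma area_mul_self (X : Matrix (Fin n) (Fin 2) ℝ) :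
    Area X * Area X = 1 + (Xᵀ * X) 0 0 + (Xᵀ * X) 1 1
      + ((Xᵀ * X) 0 0 * (Xᵀ * X) 1 1 - (Xᵀ * X) 0 1 * (Xᵀ * X) 0 1) := by
  have h := area_sq X
  rw [pow_two] at h
  rw [h, frob_eq, Matrix.det_fin_two, gram_symm]
  ring

lemma matB_apply (X : Matrix (Fin n) (Fin 2) ℝ) (p q : Fin 2) :
    matB X = Xᵀ * grad Area X * symJ - Area X • symJ := rfl

lemma matB_eq (X : Matrix (Fin n) (Fin 2) ℝ) :
    matB X = !![-((Xᵀ * X) 0 1 / Area X), -((1 + (Xᵀ * X) 1 1) / Area X);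
                (1 + (Xᵀ * X) 0 0) / Area X, (Xᵀ * X) 0 1 / Area X] := by
  have hA := (area_pos X).ne'
  have hAA := area_mul_self X
  have key : ∀ p q : Fin 2, matB X p q
      = ((Xᵀ * X) p 0 * (1 + (Xᵀ * X) 1 1) - (Xᵀ * X) p 1 * (Xᵀ * X) 0 1) / Area X * symJ 0 q
        + ((Xᵀ * X) p 1 * (1 + (Xᵀ * X) 0 0) - (Xᵀ * X) p 0 * (Xᵀ * X) 0 1) / Area X * symJ 1 q
        - Area X * symJ p q := by
    intro p q
    rw [show matB X = Xᵀ * grad Area X * symJ - Area X • symJ from rfl,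
      Matrix.sub_apply, Matrix.smul_apply, Matrix.mul_apply, Fin.sum_univ_two,
      XtG_zero, XtG_one, smul_eq_mul]
  have e00 : matB X 0 0 = -((Xᵀ * X) 0 1 / Area X) := by
    rw [key]; simp [symJ, gram_symm]; field_simp; ring
  have e01 : matB X 0 1 = -((1 + (Xᵀ * X) 1 1) / Area X) := by
    rw [key]; simp [symJ, gram_symm]; field_simp; linear_combination -hAA
  have e10 : matB X 1 0 = (1 + (Xᵀ * X) 0 0) / Area X := by
    rw [key]; simp [symJ, gram_symm]; field_simp; linear_combination hAA
  have e11 : matB X 1 1 = (Xᵀ * X) 0 1 / Area X := by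
    rw [key]; simp [symJ, gram_symm]; field_simp; ring
  rw [Matrix.eta_fin_two (matB X), e00, e01, e10, e11]

end helpers


lemma sq_le_of_sq_le_sq {x y : ℝ} (hx : 0 ≤ x) (hy : 0 ≤ y) (h : x ^ 2 ≤ y ^ 2) : x ≤ y := by
  nlinarith

lemma aux_htw (K w1 w2 t : ℝ) (hw1sq : w1 ^ 2 ≤ K ^ 2) (hw2sq : w2 ^ 2 ≤ K ^ 2)
    (ht0 : 0 ≤ t) (ht2 : t ^ 2 = (1 + w1 ^ 2) * (1 + w2 ^ 2)) :
    (1 + K ^ 2) * (w1 * w2) ≤ K ^ 2 * t := by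
  have he1 : (1 + K ^ 2) * w1 ^ 2 ≤ K ^ 2 * (1 + w1 ^ 2) := by nlinarith
  have he2 : (1 + K ^ 2) * w2 ^ 2 ≤ K ^ 2 * (1 + w2 ^ 2) := by nlinarith
  have hK2 : (0:ℝ) ≤ K ^ 2 := by nlinarith [sq_nonneg w1]
  have habs : ((1 + K ^ 2) * |w1 * w2|) ^ 2 ≤ (K ^ 2 * t) ^ 2 := by
    rw [mul_pow, mul_pow, sq_abs, ht2]
    have h12 := mul_le_mul he1 he2 (by positivity) (by nlinarith [sq_nonneg w1])
    nlinarith [h12]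
  have h' := sq_le_of_sq_le_sq (by positivity) (mul_nonneg hK2 ht0) habs
  calc (1 + K ^ 2) * (w1 * w2) ≤ (1 + K ^ 2) * |w1 * w2| := by
        have := le_abs_self (w1 * w2); nlinarith [abs_nonneg (w1 * w2)]
    _ ≤ K ^ 2 * t := h'

lemma aux_hs (u1 v1 w1 u2 v2 w2 t : ℝ)
    (h1 : u1 * v1 = 1 + w1 ^ 2) (h2 : u2 * v2 = 1 + w2 ^ 2)
    (hu1 : 0 < u1) (hv1 : 0 < v1) (hu2 : 0 < u2) (hv2 : 0 < v2)
    (ht0 : 0 ≤ t) (ht2 : t ^ 2 = (1 + w1 ^ 2) * (1 + w2 ^ 2)) :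
    2 * t ≤ u1 * v2 + u2 * v1 := by
  have hprod : (u1 * v2) * (u2 * v1) = t ^ 2 := by
    rw [ht2]; linear_combination (u2 * v2) * h1 + (1 + w1 ^ 2) * h2
  have hsq : (2 * t) ^ 2 ≤ (u1 * v2 + u2 * v1) ^ 2 := by
    nlinarith [sq_nonneg (u1 * v2 - u2 * v1)]
  have hpos : 0 ≤ u1 * v2 + u2 * v1 := by positivity
  exact sq_le_of_sq_le_sq (by positivity) hpos hsq

lemma aux_hE (K u1 v1 w1 u2 v2 w2 t : ℝ)
    (h1 : u1 * v1 = 1 + w1 ^ 2) (h2 : u2 * v2 = 1 + w2 ^ 2)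
    (hw1sq : w1 ^ 2 ≤ K ^ 2) (hw2sq : w2 ^ 2 ≤ K ^ 2)
    (ht0 : 0 ≤ t) (ht2 : t ^ 2 = (1 + w1 ^ 2) * (1 + w2 ^ 2))
    (htw : (1 + K ^ 2) * (w1 * w2) ≤ K ^ 2 * t)
    (hs : 2 * t ≤ u1 * v2 + u2 * v1) :
    (w1 - w2) ^ 2 ≤ (1 + K ^ 2) * ((w1 - w2) ^ 2 - (u1 - u2) * (v1 - v2)) := by
  have hq : (2 + w1 ^ 2 + w2 ^ 2 - 2 * t) * (2 + w1 ^ 2 + w2 ^ 2 + 2 * t)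
      = (w1 + w2) ^ 2 * (w1 - w2) ^ 2 := by linear_combination (-4 : ℝ) * ht2
  have hPt : 0 < 2 + w1 ^ 2 + w2 ^ 2 + 2 * t := by positivity
  have hbound : (1 + K ^ 2) * (w1 + w2) ^ 2 ≤ K ^ 2 * (2 + w1 ^ 2 + w2 ^ 2 + 2 * t) := by
    nlinarith [htw, hw1sq, hw2sq]
  have hmul : (1 + K ^ 2) * (2 + w1 ^ 2 + w2 ^ 2 - 2 * t) * (2 + w1 ^ 2 + w2 ^ 2 + 2 * t)
      ≤ K ^ 2 * (w1 - w2) ^ 2 * (2 + w1 ^ 2 + w2 ^ 2 + 2 * t) := by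
    calc (1 + K ^ 2) * (2 + w1 ^ 2 + w2 ^ 2 - 2 * t) * (2 + w1 ^ 2 + w2 ^ 2 + 2 * t)
        = (1 + K ^ 2) * ((w1 + w2) ^ 2 * (w1 - w2) ^ 2) := by rw [mul_assoc, hq]
      _ ≤ K ^ 2 * (2 + w1 ^ 2 + w2 ^ 2 + 2 * t) * (w1 - w2) ^ 2 := by
          nlinarith [hbound, sq_nonneg (w1 - w2), sq_nonneg (w1 + w2)]
      _ = K ^ 2 * (w1 - w2) ^ 2 * (2 + w1 ^ 2 + w2 ^ 2 + 2 * t) := by ring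
  have hqle := le_of_mul_le_mul_right hmul hPt
  have hduv : (u1 - u2) * (v1 - v2) ≤ 2 + w1 ^ 2 + w2 ^ 2 - 2 * t := by
    nlinarith [hs]
  nlinarith [hqle, hduv]

lemma aux_main (K δ u1 v1 w1 u2 v2 w2 : ℝ) (hδ : 0 < δ)
    (h1 : u1 * v1 = 1 + w1 ^ 2) (h2 : u2 * v2 = 1 + w2 ^ 2)
    (hu1l : δ ≤ u1) (hu1u : u1 ≤ K) (hv1l : δ ≤ v1) (hv1u : v1 ≤ K)
    (hu2l : δ ≤ u2) (hu2u : u2 ≤ K) (hv2l : δ ≤ v2) (hv2u : v2 ≤ K)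
    (hw1sq : w1 ^ 2 ≤ K ^ 2) (hw2sq : w2 ^ 2 ≤ K ^ 2)
    (hE0 : 0 ≤ (w1 - w2) ^ 2 - (u1 - u2) * (v1 - v2)) :
    4 * δ ^ 2 * ((u1 - u2) ^ 2 + (v1 - v2) ^ 2)
      ≤ 16 * K ^ 2 * (w1 - w2) ^ 2
        + 8 * K ^ 2 * ((w1 - w2) ^ 2 - (u1 - u2) * (v1 - v2)) := by
  have hlin : (u1 + u2) * (v1 - v2) + (v1 + v2) * (u1 - u2) = 2 * (w1 - w2) * (w1 + w2) := by
    linear_combination 2 * h1 - 2 * h2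
  have hexpand : (u1 + u2) ^ 2 * (v1 - v2) ^ 2 + (v1 + v2) ^ 2 * (u1 - u2) ^ 2
      = 4 * (w1 - w2) ^ 2 * (w1 + w2) ^ 2
        - 2 * ((u1 + u2) * (v1 + v2)) * ((u1 - u2) * (v1 - v2)) := by
    linear_combination ((u1 + u2) * (v1 - v2) + (v1 + v2) * (u1 - u2)
      + 2 * (w1 - w2) * (w1 + w2)) * hlin
  have habl : 4 * δ ^ 2 ≤ (u1 + u2) * (v1 + v2) := by nlinarith
  have habu : (u1 + u2) * (v1 + v2) ≤ 4 * K ^ 2 := by nlinarith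
  have f1 : 4 * δ ^ 2 * (u1 - u2) ^ 2 ≤ (v1 + v2) ^ 2 * (u1 - u2) ^ 2 := by
    have : 4 * δ ^ 2 ≤ (v1 + v2) ^ 2 := by nlinarith
    exact mul_le_mul_of_nonneg_right this (sq_nonneg _)
  have f2 : 4 * δ ^ 2 * (v1 - v2) ^ 2 ≤ (u1 + u2) ^ 2 * (v1 - v2) ^ 2 := by
    have : 4 * δ ^ 2 ≤ (u1 + u2) ^ 2 := by nlinarith
    exact mul_le_mul_of_nonneg_right this (sq_nonneg _)
  have f3 : 4 * (w1 - w2) ^ 2 * (w1 + w2) ^ 2 ≤ 16 * K ^ 2 * (w1 - w2) ^ 2 := by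
    have h4 : (w1 + w2) ^ 2 ≤ 4 * K ^ 2 := by nlinarith [sq_nonneg (w1 - w2)]
    have := mul_le_mul_of_nonneg_right h4 (sq_nonneg (w1 - w2))
    linarith
  have f4 : 2 * ((u1 + u2) * (v1 + v2)) * ((w1 - w2) ^ 2 - (u1 - u2) * (v1 - v2))
      ≤ 8 * K ^ 2 * ((w1 - w2) ^ 2 - (u1 - u2) * (v1 - v2)) := by
    have := mul_le_mul_of_nonneg_right habu hE0
    linarith
  have f5 : 0 ≤ 2 * ((u1 + u2) * (v1 + v2)) * (w1 - w2) ^ 2 := by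
    have h6 : (0:ℝ) ≤ u1 + u2 := by linarith
    have h7 : (0:ℝ) ≤ v1 + v2 := by linarith
    exact mul_nonneg (mul_nonneg (by norm_num) (mul_nonneg h6 h7)) (sq_nonneg _)
  linarith [hexpand, f1, f2, f3, f4, f5]

lemma key_alg (K δ : ℝ) (hK : 1 ≤ K) (hδ : 0 < δ)
    (u1 v1 w1 u2 v2 w2 : ℝ)
    (h1 : u1 * v1 = 1 + w1 ^ 2) (h2 : u2 * v2 = 1 + w2 ^ 2)
    (hu1l : δ ≤ u1) (hu1u : u1 ≤ K) (hv1l : δ ≤ v1) (hv1u : v1 ≤ K)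
    (hu2l : δ ≤ u2) (hu2u : u2 ≤ K) (hv2l : δ ≤ v2) (hv2u : v2 ≤ K)
    (hw1 : |w1| ≤ K) (hw2 : |w2| ≤ K) :
    2 * (w1 - w2) ^ 2 + (u1 - u2) ^ 2 + (v1 - v2) ^ 2
      ≤ (2 * (1 + K ^ 2) + (4 * K ^ 2 * (1 + K ^ 2) + 2 * K ^ 2) / δ ^ 2)
        * ((w1 - w2) ^ 2 - (u1 - u2) * (v1 - v2)) := by
  have hw1sq : w1 ^ 2 ≤ K ^ 2 := by nlinarith [abs_nonneg w1, sq_abs w1]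
  have hw2sq : w2 ^ 2 ≤ K ^ 2 := by nlinarith [abs_nonneg w2, sq_abs w2]
  have hu1p : 0 < u1 := lt_of_lt_of_le hδ hu1l
  have hv1p : 0 < v1 := lt_of_lt_of_le hδ hv1l
  have hu2p : 0 < u2 := lt_of_lt_of_le hδ hu2l
  have hv2p : 0 < v2 := lt_of_lt_of_le hδ hv2l
  set t := Real.sqrt ((1 + w1 ^ 2) * (1 + w2 ^ 2)) with ht
  have ht0 : 0 ≤ t := Real.sqrt_nonneg _
  have ht2 : t ^ 2 = (1 + w1 ^ 2) * (1 + w2 ^ 2) := Real.sq_sqrt (by positivity)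
  have htw := aux_htw K w1 w2 t hw1sq hw2sq ht0 ht2
  have hs := aux_hs u1 v1 w1 u2 v2 w2 t h1 h2 hu1p hv1p hu2p hv2p ht0 ht2
  have hE := aux_hE K u1 v1 w1 u2 v2 w2 t h1 h2 hw1sq hw2sq ht0 ht2 htw hs
  have hK0 : (0:ℝ) < 1 + K ^ 2 := by nlinarith
  have hE0 : 0 ≤ (w1 - w2) ^ 2 - (u1 - u2) * (v1 - v2) := by
    nlinarith [hE, sq_nonneg (w1 - w2)]
  have hmain := aux_main K δ u1 v1 w1 u2 v2 w2 hδ h1 h2 hu1l hu1u hv1l hv1u hu2l hu2u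
    hv2l hv2u hw1sq hw2sq hE0
  have hδ2 : 0 < δ ^ 2 := by positivity
  have huv : (u1 - u2) ^ 2 + (v1 - v2) ^ 2
      ≤ ((4 * K ^ 2 * (1 + K ^ 2) + 2 * K ^ 2) / δ ^ 2)
        * ((w1 - w2) ^ 2 - (u1 - u2) * (v1 - v2)) := by
    rw [div_mul_eq_mul_div, le_div_iff₀ hδ2]
    have hE16 := mul_le_mul_of_nonneg_left hE (by positivity : (0:ℝ) ≤ 16 * K ^ 2)
    linarith [hmain, hE16]
  linarith [hE, huv]


set_option maxHeartbeats 1000000 in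
/-- For every `R > 0` there exists `μ = μ(R) > 0` such that for all `X, Y ∈ ℝ^{n×2}`
with `‖X‖ ≤ R` and `‖Y‖ ≤ R` one has `det(B(X) − B(Y)) ≤ −μ·‖B(X) − B(Y)‖²`. -/

theorem matB_det_diff_neg {n : ℕ} (hn : 1 ≤ n) (R : ℝ) (hR : 0 < R) :
    ∃ μ : ℝ, 0 < μ ∧ ∀ X Y : Matrix (Fin n) (Fin 2) ℝ, frobNorm X ≤ R → frobNorm Y ≤ R →
      (matB X - matB Y).det ≤ -μ * frobNorm (matB X - matB Y) ^ 2 := by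
  set K : ℝ := 1 + R ^ 2 with hKdef
  set K0 : ℝ := Real.sqrt (1 + R ^ 2 + R ^ 4) with hK0def
  have hK0sq : K0 ^ 2 = 1 + R ^ 2 + R ^ 4 := Real.sq_sqrt (by positivity)
  have hK0pos : 0 < K0 := Real.sqrt_pos.mpr (by positivity)
  have hK0ge1 : 1 ≤ K0 := by nlinarith [hK0sq, hK0pos, sq_nonneg R, pow_pos hR 4]
  set δ : ℝ := 1 / K0 with hδdef
  have hδpos : 0 < δ := by positivity
  have hK1 : 1 ≤ K := by nlinarith [sq_nonneg R]
  set C : ℝ := 2 * (1 + K ^ 2) + (4 * K ^ 2 * (1 + K ^ 2) + 2 * K ^ 2) / δ ^ 2 with hCdef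
  have hCpos : 0 < C := by
    have h1 : (0:ℝ) < 1 + K ^ 2 := by nlinarith
    have h2 : (0:ℝ) < 4 * K ^ 2 * (1 + K ^ 2) + 2 * K ^ 2 := by nlinarith
    positivity
  refine ⟨1 / C, by positivity, fun X Y hX hY => ?_⟩
  -- bounds for a matrix Z with frobNorm Z ≤ R
  have bounds : ∀ Z : Matrix (Fin n) (Fin 2) ℝ, frobNorm Z ≤ R →
      δ ≤ (1 + (Zᵀ * Z) 0 0) / Area Z ∧ (1 + (Zᵀ * Z) 0 0) / Area Z ≤ K ∧
      δ ≤ (1 + (Zᵀ * Z) 1 1) / Area Z ∧ (1 + (Zᵀ * Z) 1 1) / Area Z ≤ K ∧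
      |(Zᵀ * Z) 0 1 / Area Z| ≤ K ∧
      ((1 + (Zᵀ * Z) 0 0) / Area Z) * ((1 + (Zᵀ * Z) 1 1) / Area Z)
        = 1 + ((Zᵀ * Z) 0 1 / Area Z) ^ 2 := by
    intro Z hZ
    set a := (Zᵀ * Z) 0 0 with ha
    set b := (Zᵀ * Z) 0 1 with hb
    set c := (Zᵀ * Z) 1 1 with hc
    set A := Area Z with hA
    have hApos : 0 < A := area_pos Z
    have hAA := area_mul_self Z
    rw [← ha, ← hb, ← hc, ← hA] at hAA
    have hfnn := frobInner_self_nonneg Z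
    have hfle : frobInner Z Z ≤ R ^ 2 := by
      have h1 : Real.sqrt (frobInner Z Z) ≤ R := hZ
      nlinarith [Real.sq_sqrt hfnn, Real.sqrt_nonneg (frobInner Z Z)]
    have hfr := frob_eq Z
    have hann : 0 ≤ a := by
      rw [ha, ← sum_col Z 0 0]
      exact Finset.sum_nonneg fun i _ => mul_self_nonneg _
    have hcnn : 0 ≤ c := by
      rw [hc, ← sum_col Z 1 1]
      exact Finset.sum_nonneg fun i _ => mul_self_nonneg _
    have haR : a ≤ R ^ 2 := by rw [ha]; rw [hfr] at hfle; linarith [hcnn]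
    have hcR : c ≤ R ^ 2 := by rw [hc]; rw [hfr] at hfle; linarith [hann]
    have hbsq : b ^ 2 ≤ a * c := by
      have h := det_gram_nonneg Z
      rw [Matrix.det_fin_two, gram_symm] at h
      rw [hb, ha, hc]; nlinarith [h]
    have hA1 : 1 ≤ A := by nlinarith [hAA, hApos, hbsq, hann, hcnn]
    have hAK0 : A ≤ K0 := by
      apply sq_le_of_sq_le_sq hApos.le hK0pos.le
      have hac : a * c ≤ R ^ 4 := by nlinarith [mul_le_mul haR hcR hcnn (sq_nonneg R)]
      nlinarith [hAA, hK0sq, hbsq, sq_nonneg b]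
    have hb2 : b ^ 2 ≤ R ^ 4 := by nlinarith [mul_le_mul haR hcR hcnn (sq_nonneg R)]
    constructor
    · rw [hδdef, div_le_div_iff₀ hK0pos hApos]; nlinarith [hAK0, hann]
    refine ⟨?_, ?_, ?_, ?_, ?_⟩
    · rw [div_le_iff₀ hApos]; nlinarith [hA1, haR]
    · rw [hδdef, div_le_div_iff₀ hK0pos hApos]; nlinarith [hAK0, hcnn]
    · rw [div_le_iff₀ hApos]; nlinarith [hA1, hcR]
    · have hwsq : (b / A) ^ 2 ≤ K ^ 2 := by
        rw [div_pow, div_le_iff₀ (by positivity)]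
        have : (1:ℝ) ≤ A ^ 2 := by nlinarith [hA1]
        nlinarith [hb2, sq_nonneg R, this, sq_nonneg b]
      have := sq_le_of_sq_le_sq (abs_nonneg (b / A)) (by linarith : (0:ℝ) ≤ K)
        (by rw [sq_abs]; exact hwsq)
      exact this
    · have h' : (1 + a) * (1 + c) = A * A + b ^ 2 := by linear_combination -hAA
      calc ((1 + a) / A) * ((1 + c) / A) = ((1 + a) * (1 + c)) / (A * A) := by ring
        _ = (A * A + b ^ 2) / (A * A) := by rw [h']
        _ = 1 + (b / A) ^ 2 := by field_simp
  obtain ⟨hu1l, hu1u, hv1l, hv1u, hw1, huv1⟩ := bounds X hX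
  obtain ⟨hu2l, hu2u, hv2l, hv2u, hw2, huv2⟩ := bounds Y hY
  set u1 := (1 + (Xᵀ * X) 0 0) / Area X
  set v1 := (1 + (Xᵀ * X) 1 1) / Area X
  set w1 := (Xᵀ * X) 0 1 / Area X
  set u2 := (1 + (Yᵀ * Y) 0 0) / Area Y
  set v2 := (1 + (Yᵀ * Y) 1 1) / Area Y
  set w2 := (Yᵀ * Y) 0 1 / Area Y
  have key := key_alg K δ hK1 hδpos u1 v1 w1 u2 v2 w2 huv1 huv2
    hu1l hu1u hv1l hv1u hu2l hu2u hv2l hv2u hw1 hw2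
  have hBX : matB X = !![-w1, -v1; u1, w1] := by
    rw [matB_eq X]
  have hBY : matB Y = !![-w2, -v2; u2, w2] := by
    rw [matB_eq Y]
  have hdet : (matB X - matB Y).det = -((w1 - w2) ^ 2 - (u1 - u2) * (v1 - v2)) := by
    rw [hBX, hBY, Matrix.det_fin_two]
    simp [Matrix.sub_apply]
    ring
  have hnorm : frobNorm (matB X - matB Y) ^ 2
      = 2 * (w1 - w2) ^ 2 + (u1 - u2) ^ 2 + (v1 - v2) ^ 2 := by
    have hfnn := frobInner_self_nonneg (matB X - matB Y)
    rw [frobNorm, Real.sq_sqrt hfnn, hBX, hBY]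
    simp [frobInner, Fin.sum_univ_two, Matrix.sub_apply]
    ring
  rw [hdet, hnorm]
  have h1 : (1 / C) * (2 * (w1 - w2) ^ 2 + (u1 - u2) ^ 2 + (v1 - v2) ^ 2)
      ≤ (1 / C) * (C * ((w1 - w2) ^ 2 - (u1 - u2) * (v1 - v2))) :=
    mul_le_mul_of_nonneg_left key (by positivity)
  have h2 : (1 / C) * (C * ((w1 - w2) ^ 2 - (u1 - u2) * (v1 - v2)))
      = (w1 - w2) ^ 2 - (u1 - u2) * (v1 - v2) := by
    field_simp
  linarith [h1]

end
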